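/- Let f : [0,1] → 2^[0,1] be upper semicontinuous with connected graph G(f). Then f has the Weak Intermediate Value Property if and only if for all 0 ≤ a ≤ b ≤ 1, every connected component of G(f) ∩ ([a,b] × [0,1]) intersects both {a} × [0,1] and {b} × [0,1]. -/

import Mathlib

open Set Metric

/-- Graph of a set-valued function on [0,1]. -/
def SVGraph (f : ℝ → Set ℝ) : Set (ℝ × ℝ) :=
  {p | p.1 ∈ Icc (0:ℝ) 1 ∧ p.2 ∈ f p.1}

/-- f has nonempty compact values contained in [0,1]. -/
def SV (f : ℝ → Set ℝ) : Prop :=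
  ∀ x ∈ Icc (0:ℝ) 1, (f x).Nonempty ∧ IsCompact (f x) ∧ f x ⊆ Icc (0:ℝ) 1

/-- Upper semicontinuity on [0,1]. -/
def USC (f : ℝ → Set ℝ) : Prop :=
  ∀ x ∈ Icc (0:ℝ) 1, ∀ U : Set ℝ, IsOpen U → f x ⊆ U →
    ∃ V : Set ℝ, IsOpen V ∧ x ∈ V ∧ ∀ v ∈ V ∩ Icc (0:ℝ) 1, f v ⊆ U

/-- Weak Intermediate Value Property. -/
def WIVP (f : ℝ → Set ℝ) : Prop :=
  ∀ x₁ ∈ Icc (0:ℝ) 1, ∀ x₂ ∈ Icc (0:ℝ) 1, x₁ ≠ x₂ → ∀ y₁ ∈ f x₁,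
    ∃ y₂ ∈ f x₂, ∀ y ∈ uIcc y₁ y₂, ∃ x ∈ uIcc x₁ x₂, y ∈ f x

/-- Intermediate Value Property. -/
def IVP (f : ℝ → Set ℝ) : Prop :=
  ∀ x₁ ∈ Icc (0:ℝ) 1, ∀ x₂ ∈ Icc (0:ℝ) 1, x₁ ≠ x₂ → ∀ y₁ ∈ f x₁, ∀ y₂ ∈ f x₂, y₁ ≠ y₂ →
    ∀ y ∈ Ioo (min y₁ y₂) (max y₁ y₂), ∃ x ∈ Ioo (min x₁ x₂) (max x₁ x₂), y ∈ f x

lemma graph_closed (f : ℝ → Set ℝ) (hSV : SV f) (husc : USC f) :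
    IsClosed (SVGraph f) := by
  rw [← isOpen_compl_iff, isOpen_iff_mem_nhds]
  intro p hp
  by_cases hx : p.1 ∈ Icc (0:ℝ) 1
  · have hy : p.2 ∉ f p.1 := fun h => hp ⟨hx, h⟩
    obtain ⟨hne, hcomp, hsub⟩ := hSV p.1 hx
    have hd : 0 < infDist p.2 (f p.1) :=
      (hcomp.isClosed.notMem_iff_infDist_pos hne).1 hy
    set d := infDist p.2 (f p.1) with hdd
    obtain ⟨V, hVo, hxV, hV⟩ := husc p.1 hx (thickening (d/2) (f p.1))
      isOpen_thickening (self_subset_thickening (by linarith) _)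
    have hmem : V ×ˢ ball p.2 (d/2) ∈ nhds p :=
      prod_mem_nhds (hVo.mem_nhds hxV) (ball_mem_nhds _ (by linarith))
    refine Filter.mem_of_superset hmem ?_
    rintro ⟨v, w⟩ ⟨hv, hw⟩ ⟨hv1, hw1⟩
    have hth : w ∈ thickening (d/2) (f p.1) := hV v ⟨hv, hv1⟩ hw1
    rw [mem_thickening_iff] at hth
    obtain ⟨z, hz, hdz⟩ := hth
    have h1 : d ≤ dist p.2 z := infDist_le_dist_of_mem hz
    have h2 : dist p.2 z ≤ dist p.2 w + dist w z := dist_triangle _ _ _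
    rw [mem_ball] at hw
    rw [dist_comm] at hw
    linarith
  · have ho : IsOpen ((Icc (0:ℝ) 1)ᶜ ×ˢ (univ : Set ℝ)) :=
      isClosed_Icc.isOpen_compl.prod isOpen_univ
    refine Filter.mem_of_superset (ho.mem_nhds ⟨hx, trivial⟩) ?_
    rintro ⟨v, w⟩ ⟨hv, -⟩ ⟨hv1, -⟩
    exact hv hv1

lemma exists_gap {U V : Set (ℝ × ℝ)} (hUc : IsCompact U) (hVc : IsCompact V)
    (hUV : U ∩ V = ∅) (hUne : U.Nonempty) (hVne : V.Nonempty) :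
    ∃ ε > 0, ∀ u ∈ U, ∀ v ∈ V, ε ≤ dist u v := by
  obtain ⟨u0, hu0, hmin⟩ := hUc.exists_isMinOn hUne (continuous_infDist_pt V).continuousOn
  refine ⟨infDist u0 V, ?_, ?_⟩
  · refine (hVc.isClosed.notMem_iff_infDist_pos hVne).1 fun h => ?_
    exact (eq_empty_iff_forall_notMem.1 hUV u0) ⟨hu0, h⟩
  · intro u hu v hv
    exact le_trans (isMinOn_iff.mp hmin u hu) (infDist_le_dist_of_mem hv)

lemma exists_clopen_parts {K : Set (ℝ × ℝ)} (hK : IsCompact K) {p : ℝ × ℝ} (hp : p ∈ K)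
    {S : Set (ℝ × ℝ)} (hS : IsClosed S)
    (hdisj : connectedComponentIn K p ∩ S = ∅) :
    ∃ U V : Set (ℝ × ℝ), IsCompact U ∧ IsCompact V ∧ U ∩ V = ∅ ∧ K = U ∪ V ∧
      p ∈ U ∧ U ∩ S = ∅ := by
  haveI : CompactSpace K := isCompact_iff_compactSpace.mp hK
  set p' : K := ⟨p, hp⟩
  set F : Set K := Subtype.val ⁻¹' S with hF
  have hFc : IsClosed F := hS.preimage continuous_subtype_val
  have hempty : (F ∩ ⋂ s : {s : Set K // IsClopen s ∧ p' ∈ s}, (s : Set K)) = ∅ := by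
    rw [← connectedComponent_eq_iInter_isClopen, eq_empty_iff_forall_notMem]
    rintro z ⟨hzF, hzC⟩
    have hz : (z : ℝ × ℝ) ∈ connectedComponentIn K p := by
      rw [connectedComponentIn_eq_image hp]
      exact ⟨z, hzC, rfl⟩
    exact (eq_empty_iff_forall_notMem.1 hdisj z) ⟨hz, hzF⟩
  obtain ⟨t, ht⟩ := hFc.isCompact.elim_finite_subfamily_closed _ (fun s => s.2.1.1) hempty
  set U0 : Set K := ⋂ s ∈ t, (s : Set K) with hU0def
  have hU0 : IsClopen U0 := isClopen_biInter_finset (fun s _ => s.2.1)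
  have hpU0 : p' ∈ U0 := mem_iInter₂.2 fun s _ => s.2.2
  refine ⟨Subtype.val '' U0, Subtype.val '' U0ᶜ, ?_, ?_, ?_, ?_, ⟨p', hpU0, rfl⟩, ?_⟩
  · exact hU0.isClosed.isCompact.image continuous_subtype_val
  · exact (isClosed_compl_iff.2 hU0.isOpen).isCompact.image continuous_subtype_val
  · rw [← image_inter Subtype.val_injective, inter_compl_self, image_empty]
  · rw [← image_union, union_compl_self, image_univ, Subtype.range_val]
  · rw [eq_empty_iff_forall_notMem]
    rintro z ⟨⟨w, hwU0, rfl⟩, hzS⟩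
    exact (eq_empty_iff_forall_notMem.1 ht w) ⟨hzS, hwU0⟩

lemma reach_right (f : ℝ → Set ℝ) (hSV : SV f) (hW : WIVP f)
    (a b : ℝ) (ha : 0 ≤ a) (hab : a ≤ b) (hb : b ≤ 1)
    (U V : Set (ℝ × ℝ)) (hUc : IsCompact U) (hVc : IsCompact V)
    (hUV : U ∩ V = ∅)
    (hcover : SVGraph f ∩ Icc a b ×ˢ Icc (0:ℝ) 1 = U ∪ V)
    (hUne : U.Nonempty) :
    (U ∩ {q : ℝ × ℝ | q.1 = b}).Nonempty := by
  by_contra hslice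
  rw [not_nonempty_iff_eq_empty] at hslice
  have hsub : U ⊆ SVGraph f ∩ Icc a b ×ˢ Icc (0:ℝ) 1 := hcover ▸ subset_union_left
  obtain ⟨q, hqU, hqmax⟩ := hUc.exists_isMaxOn hUne continuous_fst.continuousOn
  have hqK := hsub hqU
  have hq1ab : q.1 ∈ Icc a b := hqK.2.1
  have hq1I : q.1 ∈ Icc (0:ℝ) 1 := ⟨ha.trans hq1ab.1, hq1ab.2.trans hb⟩
  have hqb : q.1 < b := lt_of_le_of_ne hq1ab.2
    (fun h => (eq_empty_iff_forall_notMem.1 hslice q) ⟨hqU, h⟩)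
  have hbI : b ∈ Icc (0:ℝ) 1 := ⟨ha.trans hab, hb⟩
  obtain ⟨yb, hyb⟩ := (hSV b hbI).1
  have hbK : ((b, yb) : ℝ × ℝ) ∈ SVGraph f ∩ Icc a b ×ˢ Icc (0:ℝ) 1 :=
    ⟨⟨hbI, hyb⟩, ⟨hab, le_refl b⟩, (hSV b hbI).2.2 hyb⟩
  have hbV : ((b, yb) : ℝ × ℝ) ∈ V := by
    rcases hcover ▸ hbK with h | h
    · exact absurd ⟨h, rfl⟩ (eq_empty_iff_forall_notMem.1 hslice _)
    · exact h
  obtain ⟨ε, hε, hgap⟩ := exists_gap hUc hVc hUV hUne ⟨_, hbV⟩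
  set δ := min ε (b - q.1) / 2 with hδdef
  have hδpos : 0 < δ := by
    have : 0 < min ε (b - q.1) := lt_min hε (by linarith)
    positivity
  have hδε : δ < ε := by
    have h1 : min ε (b - q.1) ≤ ε := min_le_left _ _
    simp only [hδdef]; linarith
  have hδb : q.1 + δ < b := by
    have h1 : min ε (b - q.1) ≤ b - q.1 := min_le_right _ _
    simp only [hδdef]; linarith
  set x2 := q.1 + δ with hx2def
  have hqx2 : q.1 < x2 := by simp only [hx2def]; linarith
  have hx2I : x2 ∈ Icc (0:ℝ) 1 := ⟨le_trans hq1I.1 hqx2.le, le_trans hδb.le hb⟩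
  obtain ⟨y2, hy2, hall⟩ := hW q.1 hq1I x2 hx2I (ne_of_lt hqx2) q.2 hqK.1.2
  set A := Prod.snd '' (U ∩ Icc q.1 x2 ×ˢ (univ : Set ℝ)) with hA
  set B := Prod.snd '' (V ∩ Icc q.1 x2 ×ˢ (univ : Set ℝ)) with hB
  have hAc : IsCompact A :=
    (hUc.inter_right (isClosed_Icc.prod isClosed_univ)).image continuous_snd
  have hBc : IsCompact B :=
    (hVc.inter_right (isClosed_Icc.prod isClosed_univ)).image continuous_snd
  have hIsub : uIcc q.2 y2 ⊆ A ∪ B := by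
    intro y hy
    obtain ⟨x, hx, hyx⟩ := hall y hy
    rw [uIcc_of_le hqx2.le] at hx
    have hxab : x ∈ Icc a b := ⟨hq1ab.1.trans hx.1, hx.2.trans hδb.le⟩
    have hxI : x ∈ Icc (0:ℝ) 1 := ⟨ha.trans hxab.1, hxab.2.trans hb⟩
    have hxK : ((x, y) : ℝ × ℝ) ∈ SVGraph f ∩ Icc a b ×ˢ Icc (0:ℝ) 1 :=
      ⟨⟨hxI, hyx⟩, hxab, (hSV x hxI).2.2 hyx⟩
    rcases hcover ▸ hxK with h | h
    · exact Or.inl ⟨(x, y), ⟨h, hx, trivial⟩, rfl⟩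
    · exact Or.inr ⟨(x, y), ⟨h, hx, trivial⟩, rfl⟩
  have hnoAB : ∀ y, y ∈ A → y ∈ B → False := by
    rintro y ⟨u, ⟨huU, hu1, -⟩, huy⟩ ⟨v, ⟨hvV, hv1, -⟩, hvy⟩
    have hge := hgap u huU v hvV
    have hlt : dist u v < ε := by
      rw [Prod.dist_eq]
      apply max_lt
      · calc dist u.1 v.1 ≤ x2 - q.1 := Real.dist_le_of_mem_Icc hu1 hv1
          _ = δ := by simp [hx2def]
          _ < ε := hδε
      · rw [show u.2 = y from huy, show v.2 = y from hvy]
        simpa using hε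
    linarith
  have hq2A : q.2 ∈ A := ⟨q, ⟨hqU, ⟨le_refl _, hqx2.le⟩, trivial⟩, rfl⟩
  have hBempty : uIcc q.2 y2 ∩ B = ∅ := by
    rw [eq_empty_iff_forall_notMem]
    rintro y ⟨hyI, hyB⟩
    have hpre : IsPreconnected (uIcc q.2 y2) := isPreconnected_uIcc
    rw [isPreconnected_closed_iff] at hpre
    obtain ⟨z, -, hzA, hzB⟩ := hpre A B hAc.isClosed hBc.isClosed hIsub
      ⟨q.2, left_mem_uIcc, hq2A⟩ ⟨y, hyI, hyB⟩
    exact hnoAB z hzA hzB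
  have hy2A : y2 ∈ A := by
    rcases hIsub right_mem_uIcc with h | h
    · exact h
    · exact absurd ⟨right_mem_uIcc, h⟩ (eq_empty_iff_forall_notMem.1 hBempty y2)
  obtain ⟨u, ⟨huU, hu1, -⟩, huy⟩ := hy2A
  have hx2ab : x2 ∈ Icc a b := ⟨hq1ab.1.trans hqx2.le, hδb.le⟩
  have h2K : ((x2, y2) : ℝ × ℝ) ∈ SVGraph f ∩ Icc a b ×ˢ Icc (0:ℝ) 1 :=
    ⟨⟨hx2I, hy2⟩, hx2ab, (hSV x2 hx2I).2.2 hy2⟩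
  rcases hcover ▸ h2K with h | h
  · have := isMaxOn_iff.mp hqmax (x2, y2) h
    simp only at this
    exact absurd this (not_le.2 hqx2)
  · have hge := hgap u huU (x2, y2) h
    have hlt : dist u (x2, y2) < ε := by
      rw [Prod.dist_eq]
      apply max_lt
      · calc dist u.1 x2 ≤ x2 - q.1 := Real.dist_le_of_mem_Icc hu1 ⟨hqx2.le, le_refl _⟩
          _ = δ := by simp [hx2def]
          _ < ε := hδε
      · rw [show u.2 = y2 from huy]
        simpa using hε
    linarith

lemma reach_left (f : ℝ → Set ℝ) (hSV : SV f) (hW : WIVP f)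
    (a b : ℝ) (ha : 0 ≤ a) (hab : a ≤ b) (hb : b ≤ 1)
    (U V : Set (ℝ × ℝ)) (hUc : IsCompact U) (hVc : IsCompact V)
    (hUV : U ∩ V = ∅)
    (hcover : SVGraph f ∩ Icc a b ×ˢ Icc (0:ℝ) 1 = U ∪ V)
    (hUne : U.Nonempty) :
    (U ∩ {q : ℝ × ℝ | q.1 = a}).Nonempty := by
  by_contra hslice
  rw [not_nonempty_iff_eq_empty] at hslice
  have hsub : U ⊆ SVGraph f ∩ Icc a b ×ˢ Icc (0:ℝ) 1 := hcover ▸ subset_union_left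
  obtain ⟨q, hqU, hqmin⟩ := hUc.exists_isMinOn hUne continuous_fst.continuousOn
  have hqK := hsub hqU
  have hq1ab : q.1 ∈ Icc a b := hqK.2.1
  have hq1I : q.1 ∈ Icc (0:ℝ) 1 := ⟨ha.trans hq1ab.1, hq1ab.2.trans hb⟩
  have hqa : a < q.1 := lt_of_le_of_ne hq1ab.1
    (fun h => (eq_empty_iff_forall_notMem.1 hslice q) ⟨hqU, h.symm⟩)
  have haI : a ∈ Icc (0:ℝ) 1 := ⟨ha, hab.trans hb⟩
  obtain ⟨ya, hya⟩ := (hSV a haI).1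
  have haK : ((a, ya) : ℝ × ℝ) ∈ SVGraph f ∩ Icc a b ×ˢ Icc (0:ℝ) 1 :=
    ⟨⟨haI, hya⟩, ⟨le_refl a, hab⟩, (hSV a haI).2.2 hya⟩
  have haV : ((a, ya) : ℝ × ℝ) ∈ V := by
    rcases hcover ▸ haK with h | h
    · exact absurd ⟨h, rfl⟩ (eq_empty_iff_forall_notMem.1 hslice _)
    · exact h
  obtain ⟨ε, hε, hgap⟩ := exists_gap hUc hVc hUV hUne ⟨_, haV⟩
  set δ := min ε (q.1 - a) / 2 with hδdef
  have hδpos : 0 < δ := by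
    have : 0 < min ε (q.1 - a) := lt_min hε (by linarith)
    positivity
  have hδε : δ < ε := by
    have h1 : min ε (q.1 - a) ≤ ε := min_le_left _ _
    simp only [hδdef]; linarith
  have hδa : a < q.1 - δ := by
    have h1 : min ε (q.1 - a) ≤ q.1 - a := min_le_right _ _
    simp only [hδdef]; linarith
  set x2 := q.1 - δ with hx2def
  have hqx2 : x2 < q.1 := by simp only [hx2def]; linarith
  have hx2I : x2 ∈ Icc (0:ℝ) 1 := ⟨le_trans ha hδa.le, le_trans hqx2.le hq1I.2⟩
  obtain ⟨y2, hy2, hall⟩ := hW q.1 hq1I x2 hx2I (ne_of_gt hqx2) q.2 hqK.1.2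
  set A := Prod.snd '' (U ∩ Icc x2 q.1 ×ˢ (univ : Set ℝ)) with hA
  set B := Prod.snd '' (V ∩ Icc x2 q.1 ×ˢ (univ : Set ℝ)) with hB
  have hAc : IsCompact A :=
    (hUc.inter_right (isClosed_Icc.prod isClosed_univ)).image continuous_snd
  have hBc : IsCompact B :=
    (hVc.inter_right (isClosed_Icc.prod isClosed_univ)).image continuous_snd
  have hIsub : uIcc q.2 y2 ⊆ A ∪ B := by
    intro y hy
    obtain ⟨x, hx, hyx⟩ := hall y hy
    rw [uIcc_of_ge hqx2.le] at hx
    have hxab : x ∈ Icc a b := ⟨hδa.le.trans hx.1, hx.2.trans hq1ab.2⟩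
    have hxI : x ∈ Icc (0:ℝ) 1 := ⟨ha.trans hxab.1, hxab.2.trans hb⟩
    have hxK : ((x, y) : ℝ × ℝ) ∈ SVGraph f ∩ Icc a b ×ˢ Icc (0:ℝ) 1 :=
      ⟨⟨hxI, hyx⟩, hxab, (hSV x hxI).2.2 hyx⟩
    rcases hcover ▸ hxK with h | h
    · exact Or.inl ⟨(x, y), ⟨h, hx, trivial⟩, rfl⟩
    · exact Or.inr ⟨(x, y), ⟨h, hx, trivial⟩, rfl⟩
  have hnoAB : ∀ y, y ∈ A → y ∈ B → False := by
    rintro y ⟨u, ⟨huU, hu1, -⟩, huy⟩ ⟨v, ⟨hvV, hv1, -⟩, hvy⟩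
    have hge := hgap u huU v hvV
    have hlt : dist u v < ε := by
      rw [Prod.dist_eq]
      apply max_lt
      · calc dist u.1 v.1 ≤ q.1 - x2 := Real.dist_le_of_mem_Icc hu1 hv1
          _ = δ := by simp [hx2def]
          _ < ε := hδε
      · rw [show u.2 = y from huy, show v.2 = y from hvy]
        simpa using hε
    linarith
  have hq2A : q.2 ∈ A := ⟨q, ⟨hqU, ⟨hqx2.le, le_refl _⟩, trivial⟩, rfl⟩
  have hBempty : uIcc q.2 y2 ∩ B = ∅ := by
    rw [eq_empty_iff_forall_notMem]
    rintro y ⟨hyI, hyB⟩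
    have hpre : IsPreconnected (uIcc q.2 y2) := isPreconnected_uIcc
    rw [isPreconnected_closed_iff] at hpre
    obtain ⟨z, -, hzA, hzB⟩ := hpre A B hAc.isClosed hBc.isClosed hIsub
      ⟨q.2, left_mem_uIcc, hq2A⟩ ⟨y, hyI, hyB⟩
    exact hnoAB z hzA hzB
  have hy2A : y2 ∈ A := by
    rcases hIsub right_mem_uIcc with h | h
    · exact h
    · exact absurd ⟨right_mem_uIcc, h⟩ (eq_empty_iff_forall_notMem.1 hBempty y2)
  obtain ⟨u, ⟨huU, hu1, -⟩, huy⟩ := hy2A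
  have hx2ab : x2 ∈ Icc a b := ⟨hδa.le, hqx2.le.trans hq1ab.2⟩
  have h2K : ((x2, y2) : ℝ × ℝ) ∈ SVGraph f ∩ Icc a b ×ˢ Icc (0:ℝ) 1 :=
    ⟨⟨hx2I, hy2⟩, hx2ab, (hSV x2 hx2I).2.2 hy2⟩
  rcases hcover ▸ h2K with h | h
  · have := isMinOn_iff.mp hqmin (x2, y2) h
    simp only at this
    exact absurd this (not_le.2 hqx2)
  · have hge := hgap u huU (x2, y2) h
    have hlt : dist u (x2, y2) < ε := by
      rw [Prod.dist_eq]
      apply max_lt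
      · calc dist u.1 x2 ≤ q.1 - x2 := Real.dist_le_of_mem_Icc hu1 ⟨le_refl _, hqx2.le⟩
          _ = δ := by simp [hx2def]
          _ < ε := hδε
      · rw [show u.2 = y2 from huy]
        simpa using hε
    linarith

theorem stmt2 (f : ℝ → Set ℝ) (hSV : SV f) (husc : USC f)
    (hconn : IsConnected (SVGraph f)) :
    WIVP f ↔
      ∀ a b : ℝ, 0 ≤ a → a ≤ b → b ≤ 1 →
        ∀ p ∈ SVGraph f ∩ Icc a b ×ˢ Icc (0:ℝ) 1,
          (connectedComponentIn (SVGraph f ∩ Icc a b ×ˢ Icc (0:ℝ) 1) p ∩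
            {q : ℝ × ℝ | q.1 = a}).Nonempty ∧
          (connectedComponentIn (SVGraph f ∩ Icc a b ×ˢ Icc (0:ℝ) 1) p ∩
            {q : ℝ × ℝ | q.1 = b}).Nonempty := by
  have hGc := graph_closed f hSV husc
  constructor
  · intro hW a b ha hab hb p hp
    have hKc : IsCompact (SVGraph f ∩ Icc a b ×ˢ Icc (0:ℝ) 1) :=
      (isCompact_Icc.prod isCompact_Icc).inter_left hGc
    constructor
    · by_contra hcon
      rw [not_nonempty_iff_eq_empty] at hcon
      obtain ⟨U, V, hUc, hVc, hUV, hcov, hpU, hUS⟩ :=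
        exists_clopen_parts hKc hp (isClosed_eq continuous_fst continuous_const) hcon
      obtain ⟨z, hzU, hz⟩ := reach_left f hSV hW a b ha hab hb U V hUc hVc hUV hcov ⟨p, hpU⟩
      exact (eq_empty_iff_forall_notMem.1 hUS z) ⟨hzU, hz⟩
    · by_contra hcon
      rw [not_nonempty_iff_eq_empty] at hcon
      obtain ⟨U, V, hUc, hVc, hUV, hcov, hpU, hUS⟩ :=
        exists_clopen_parts hKc hp (isClosed_eq continuous_fst continuous_const) hcon
      obtain ⟨z, hzU, hz⟩ := reach_right f hSV hW a b ha hab hb U V hUc hVc hUV hcov ⟨p, hpU⟩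
      exact (eq_empty_iff_forall_notMem.1 hUS z) ⟨hzU, hz⟩
  · intro h x1 hx1 x2 hx2 hne y1 hy1
    have hy1I : y1 ∈ Icc (0:ℝ) 1 := (hSV x1 hx1).2.2 hy1
    have hp : (x1, y1) ∈ SVGraph f ∩ Icc (min x1 x2) (max x1 x2) ×ˢ Icc (0:ℝ) 1 :=
      ⟨⟨hx1, hy1⟩, ⟨min_le_left _ _, le_max_left _ _⟩, hy1I⟩
    obtain ⟨h1, h2⟩ := h (min x1 x2) (max x1 x2) (le_min hx1.1 hx2.1) min_le_max
      (max_le hx1.2 hx2.2) (x1, y1) hp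
    set C := connectedComponentIn
      (SVGraph f ∩ Icc (min x1 x2) (max x1 x2) ×ˢ Icc (0:ℝ) 1) (x1, y1) with hC
    have hCK : C ⊆ SVGraph f ∩ Icc (min x1 x2) (max x1 x2) ×ˢ Icc (0:ℝ) 1 :=
      connectedComponentIn_subset _ _
    have hCconn : IsPreconnected C :=
      (isConnected_connectedComponentIn_iff.mpr hp).isPreconnected
    have hone : ∃ q ∈ C, q.1 = x2 := by
      rcases le_total x1 x2 with hle | hle
      · obtain ⟨q, hqC, hq⟩ := h2
        exact ⟨q, hqC, hq.trans (max_eq_right hle)⟩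
      · obtain ⟨q, hqC, hq⟩ := h1
        exact ⟨q, hqC, hq.trans (min_eq_right hle)⟩
    obtain ⟨q, hqC, hq1⟩ := hone
    refine ⟨q.2, ?_, ?_⟩
    · have := (hCK hqC).1.2
      rwa [hq1] at this
    · intro y hy
      have himg : IsPreconnected (Prod.snd '' C) :=
        hCconn.image _ continuous_snd.continuousOn
      have h1img : y1 ∈ Prod.snd '' C := ⟨(x1, y1), mem_connectedComponentIn hp, rfl⟩
      have h2img : q.2 ∈ Prod.snd '' C := ⟨q, hqC, rfl⟩
      obtain ⟨r, hrC, hry⟩ := himg.ordConnected.uIcc_subset h1img h2img hy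
      refine ⟨r.1, ?_, ?_⟩
      · have hrab := (hCK hrC).2.1
        rw [uIcc]
        simpa using hrab
      · have := (hCK hrC).1.2
        rwa [hry] at this
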